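/- Let f : X ⟶ Y and g : V ⟶ W be morphisms of A, viewed as objects of Arrow(A). For every t ∈ ℕ, the group Sha^{t+1}(f, g) is isomorphic (as an abelian group) to the cokernel of the map ι^* : Ext^t_{Arrow(A)}(FG(f), g) → Ext^t_{Arrow(A)}(ker(ε_f), g) given by precomposition with the kernel inclusion ker(ε_f) ⟶ FG(f). -/

import Mathlib

open CategoryTheory Limits

universe w v u

variable (A : Type u) [Category.{v} A] [Abelian A]

/-- The functor `F : A × A ⥤ Arrow A` sending `(X, Y)` to the object
`biprod.inl : X ⟶ X ⊞ Y` of the arrow category. -/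
@[simps]
noncomputable def ArrF : A × A ⥤ Arrow A where
  obj p := Arrow.mk (biprod.inl : p.1 ⟶ p.1 ⊞ p.2)
  map {p q} φ := Arrow.homMk (u := φ.1) (v := biprod.map φ.1 φ.2) (by simp)

/-- The forgetful functor `G : Arrow A ⥤ A × A` sending an object `f : X ⟶ Y` of the
arrow category to the pair `(X, Y)`. -/
@[simps]
def ArrG : Arrow A ⥤ A × A where
  obj f := (f.left, f.right)
  map φ := (φ.left, φ.right)

variable {A}

/-- The counit morphism `ε_f : FG(f) ⟶ f`, whose domain component is `𝟙 X` and whose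
codomain component is `biprod.desc f 𝟙 : X ⊞ Y ⟶ Y`. -/
noncomputable def arrCounit (f : Arrow A) : (ArrF A).obj ((ArrG A).obj f) ⟶ f :=
  Arrow.homMk (u := 𝟙 f.left) (v := biprod.desc f.hom (𝟙 f.right)) (by simp [ArrF, ArrG])

/-- The map `ε_f^* : Ext^n_{Arrow A}(f, g) → Ext^n_{Arrow A}(FG(f), g)` given by
precomposition with the counit `ε_f`, as a homomorphism of abelian groups.
`Sha^n(f, g)` is its kernel. -/
noncomputable def shaHom [Abelian (Arrow A)] [HasExt.{w} (Arrow A)]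
    (f g : Arrow A) (n : ℕ) :
    Abelian.Ext f g n →+ Abelian.Ext ((ArrF A).obj ((ArrG A).obj f)) g n :=
  AddMonoidHom.mk' (fun e => (Abelian.Ext.mk₀ (arrCounit f)).comp e (zero_add n))
    (fun a b => Abelian.Ext.comp_add _ a b _)

/-- The map `ι^* : Ext^t_{Arrow A}(FG(f), g) → Ext^t_{Arrow A}(ker(ε_f), g)` given by
precomposition with the kernel inclusion `ker(ε_f) ⟶ FG(f)`, as a homomorphism of
abelian groups. -/
noncomputable def precompKerHom [Abelian (Arrow A)] [HasExt.{w} (Arrow A)]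
    (f g : Arrow A) (t : ℕ) :
    Abelian.Ext ((ArrF A).obj ((ArrG A).obj f)) g t →+
      Abelian.Ext (kernel (arrCounit f) : Arrow A) g t :=
  AddMonoidHom.mk' (fun e => (Abelian.Ext.mk₀ (kernel.ι (arrCounit f))).comp e (zero_add t))
    (fun a b => Abelian.Ext.comp_add _ a b _)

/-- for morphisms `f : X ⟶ Y` and `g : V ⟶ W` of `A`, viewed as objects
of `Arrow A`, and every `t : ℕ`, the group `Sha^{t+1}(f, g)` is isomorphic, as an
abelian group, to the cokernel of the map
`ι^* : Ext^t_{Arrow A}(FG(f), g) → Ext^t_{Arrow A}(ker(ε_f), g)` given by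
precomposition with the kernel inclusion `ker(ε_f) ⟶ FG(f)`. -/
theorem statement17 [EnoughProjectives A] [Abelian (Arrow A)] [HasExt.{w} (Arrow A)]
    {X Y V W : A} (f : X ⟶ Y) (g : V ⟶ W) (t : ℕ) :
    Nonempty ((shaHom (Arrow.mk f) (Arrow.mk g) (t + 1)).ker ≃+
      (Abelian.Ext (kernel (arrCounit (Arrow.mk f)) : Arrow A) (Arrow.mk g) t ⧸
        (precompKerHom (Arrow.mk f) (Arrow.mk g) t).range)) := by
  set ε := arrCounit (Arrow.mk f) with hεdef
  -- ε is an epimorphism since both components are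
  have hrsplit : IsSplitEpi ε.right :=
    IsSplitEpi.mk' ⟨biprod.inr, by rw [hεdef]; exact biprod.inr_desc _ _⟩
  have hlepi : Epi ε.left := by
    have : ε.left = 𝟙 _ := rfl
    rw [this]; exact ⟨fun g h hh => (Category.id_comp g).symm.trans (hh.trans (Category.id_comp h))⟩
  have hrepi : Epi ε.right := hrsplit.epi
  have hepi : Epi ε := ⟨fun {Z} ψ χ h => by
    ext
    · exact (cancel_epi ε.left).1 (congrArg CommaMorphism.left h)
    · exact (cancel_epi ε.right).1 (congrArg CommaMorphism.right h)⟩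
  -- the short exact sequence ker ε → FG(f) → f
  let K : Arrow A := kernel ε
  let ικ : K ⟶ (ArrF A).obj ((ArrG A).obj (Arrow.mk f)) := kernel.ι ε
  have hmono : Mono ικ := inferInstanceAs (Mono (kernel.ι ε))
  have hcond : ικ ≫ ε = 0 := kernel.condition ε
  have hlift : ∀ {Z : Arrow A} (k : Z ⟶ (ArrF A).obj ((ArrG A).obj (Arrow.mk f))),
      k ≫ ε = 0 → ∃ l : Z ⟶ K, l ≫ ικ = k :=
    fun k hk => ⟨kernel.lift ε k hk, kernel.lift_ι _ _ _⟩
  have hz : ∀ {P Q : Arrow A}, (0 : P ⟶ Q) =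
      (@HasZeroMorphisms.zero _ _ (@Preadditive.preadditiveHasZeroMorphisms _ _
        (Abelian.toPreadditive (C := Arrow A))) P Q).zero := fun {P Q} =>
    congrArg (fun I : HasZeroMorphisms (Arrow A) => (@HasZeroMorphisms.zero _ _ I P Q).zero)
      (Subsingleton.elim _ _)
  letI : Preadditive (Arrow A) := Abelian.toPreadditive (C := Arrow A)
  let S : ShortComplex (Arrow A) := ShortComplex.mk ικ ε (hcond.trans hz)
  have hS : S.ShortExact :=
    { exact := S.exact_of_f_is_kernel (KernelFork.IsLimit.ofι _ _
        (fun k hk => Classical.choose (hlift k (hk.trans hz.symm)))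
        (fun k hk => Classical.choose_spec (hlift k (hk.trans hz.symm)))
        (fun k hk m hm => (cancel_mono ικ).1
          (hm.trans (Classical.choose_spec (hlift k (hk.trans hz.symm))).symm)))
      mono_f := hmono
      epi_g := hepi }
  -- the connecting homomorphism
  let δ : Abelian.Ext K (Arrow.mk g) t →+
      Abelian.Ext (Arrow.mk f) (Arrow.mk g) (t + 1) :=
    hS.extClass.precomp (Arrow.mk g) (Nat.add_comm 1 t)
  have hδ : ∀ x, δ x = hS.extClass.comp x (Nat.add_comm 1 t) := fun _ => rfl
  -- δ lands in the kernel of shaHom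
  have hmem : ∀ x, δ x ∈ (shaHom (Arrow.mk f) (Arrow.mk g) (t + 1)).ker := by
    intro x
    rw [AddMonoidHom.mem_ker]
    show (Abelian.Ext.mk₀ ε).comp (hS.extClass.comp x (Nat.add_comm 1 t)) (zero_add (t + 1)) = 0
    exact hS.comp_extClass_assoc x _
  let δ' : Abelian.Ext K (Arrow.mk g) t →+
      (shaHom (Arrow.mk f) (Arrow.mk g) (t + 1)).ker :=
    δ.codRestrict _ hmem
  -- δ' is surjective
  have hsurj : Function.Surjective δ' := by
    rintro ⟨y, hy⟩
    rw [AddMonoidHom.mem_ker] at hy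
    obtain ⟨x, hx⟩ := Abelian.Ext.contravariant_sequence_exact₃ hS (Arrow.mk g) y hy
      (n₀ := t) (Nat.add_comm 1 t)
    exact ⟨x, Subtype.ext hx⟩
  -- the kernel of δ' is the range of precompKerHom
  have hker : δ'.ker = (precompKerHom (Arrow.mk f) (Arrow.mk g) t).range := by
    ext x
    rw [AddMonoidHom.mem_ker, AddMonoidHom.mem_range]
    constructor
    · intro hx
      have hx' : hS.extClass.comp x (Nat.add_comm 1 t) = 0 := congrArg Subtype.val hx
      obtain ⟨x₂, hx₂⟩ := Abelian.Ext.contravariant_sequence_exact₁ hS (Arrow.mk g) x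
        (n₁ := t + 1) (Nat.add_comm 1 t) hx'
      exact ⟨x₂, hx₂⟩
    · rintro ⟨y, rfl⟩
      refine Subtype.ext ?_
      show hS.extClass.comp
        ((Abelian.Ext.mk₀ ικ).comp y (zero_add t)) (Nat.add_comm 1 t) = 0
      exact hS.extClass_comp_assoc y
  exact ⟨((QuotientAddGroup.quotientAddEquivOfEq hker).symm.trans
    (QuotientAddGroup.quotientKerEquivOfSurjective δ' hsurj)).symm⟩
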